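/- For each p ≥ 2, the graph G_{2p} is vertex-transitive and edge-transitive. -/

import Mathlib

/-- A star colouring: a proper colouring with no bicoloured 4-vertex path. -/
def IsStarColoring {V : Type*} {α : Type*} (G : SimpleGraph V) (f : V → α) : Prop :=
  (∀ ⦃u v : V⦄, G.Adj u v → f u ≠ f v) ∧
  ∀ ⦃a b c d : V⦄, G.Adj a b → G.Adj b c → G.Adj c d →
    a ≠ c → a ≠ d → b ≠ d → ¬(f a = f c ∧ f b = f d)

/-- The vertex set of the graph G_{2p}: ordered pairs (i,j), i ≠ j. -/
def G2pVert (p : ℕ) := {x : Fin (p + 2) × Fin (p + 2) // x.1 ≠ x.2}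

/-- The graph G_{2p}: (i,j) ~ (k,l) iff (k = j and l ∉ {i,j}) or
(k ∉ {i,j} and l = i). -/
def G2p (p : ℕ) : SimpleGraph (G2pVert p) where
  Adj a b := (b.1.1 = a.1.2 ∧ b.1.2 ≠ a.1.1 ∧ b.1.2 ≠ a.1.2) ∨
             (b.1.1 ≠ a.1.1 ∧ b.1.1 ≠ a.1.2 ∧ b.1.2 = a.1.1)
  symm := by
    constructor
    rintro ⟨⟨i, j⟩, hij⟩ ⟨⟨k, l⟩, hkl⟩ (⟨h1, h2, h3⟩ | ⟨h1, h2, h3⟩)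
    · subst h1
      exact Or.inr ⟨hij, Ne.symm h2, rfl⟩
    · subst h3
      exact Or.inl ⟨rfl, Ne.symm h2, Ne.symm hij⟩
  loopless := by
    constructor
    rintro ⟨⟨i, j⟩, hij⟩ (⟨h1, _, _⟩ | ⟨h1, _, _⟩)
    · exact hij h1
    · exact h1 rfl


section Aux

lemma exists_perm2 {α : Type*} [DecidableEq α] {a b c d : α}
    (hab : a ≠ b) (hcd : c ≠ d) :
    ∃ e : Equiv.Perm α, e a = c ∧ e b = d := by
  have hwc : Equiv.swap a c b ≠ c := fun h => hab ((Equiv.swap a c).injective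
    (by rw [Equiv.swap_apply_left, h]))
  refine ⟨(Equiv.swap a c).trans (Equiv.swap (Equiv.swap a c b) d), ?_, ?_⟩
  · simp only [Equiv.trans_apply, Equiv.swap_apply_left]
    exact Equiv.swap_apply_of_ne_of_ne (Ne.symm hwc) hcd
  · simp only [Equiv.trans_apply, Equiv.swap_apply_left]

lemma exists_perm3 {α : Type*} [DecidableEq α] {a b c a' b' c' : α}
    (h1 : a ≠ b) (h2 : a ≠ c) (h3 : b ≠ c)
    (h1' : a' ≠ b') (h2' : a' ≠ c') (h3' : b' ≠ c') :
    ∃ e : Equiv.Perm α, e a = a' ∧ e b = b' ∧ e c = c' := by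
  obtain ⟨e1, he1, he2⟩ := exists_perm2 h1 h1'
  have hwa : e1 c ≠ a' := fun h => h2 (e1.injective (by rw [he1, h]))
  have hwb : e1 c ≠ b' := fun h => h3 (e1.injective (by rw [he2, h]))
  refine ⟨e1.trans (Equiv.swap (e1 c) c'), ?_, ?_, ?_⟩
  · simp only [Equiv.trans_apply, he1]
    exact Equiv.swap_apply_of_ne_of_ne (Ne.symm hwa) h2'
  · simp only [Equiv.trans_apply, he2]
    exact Equiv.swap_apply_of_ne_of_ne (Ne.symm hwb) h3'
  · simp only [Equiv.trans_apply, Equiv.swap_apply_left]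

/-- The automorphism of G2p induced by a permutation of the ground set. -/
def permIso (p : ℕ) (e : Equiv.Perm (Fin (p + 2))) : G2p p ≃g G2p p where
  toEquiv := ((Equiv.prodCongr e e).subtypeEquiv (fun x => by
    simp [not_iff_not, e.injective.eq_iff]))
  map_rel_iff' := by
    rintro ⟨⟨i, j⟩, hij⟩ ⟨⟨k, l⟩, hkl⟩
    show (e k = e j ∧ e l ≠ e i ∧ e l ≠ e j) ∨
      (e k ≠ e i ∧ e k ≠ e j ∧ e l = e i) ↔ _
    simp [e.injective.eq_iff, G2p]

lemma permIso_apply (p : ℕ) (e : Equiv.Perm (Fin (p + 2))) (v : G2pVert p) :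
    ((permIso p e) v : G2pVert p).1 = (e v.1.1, e v.1.2) := rfl

/-- Helper: map an oriented type-1 edge to another oriented type-1 edge. -/
lemma oriented_map (p : ℕ) (a b c d : G2pVert p)
    (hab : b.1.1 = a.1.2 ∧ b.1.2 ≠ a.1.1 ∧ b.1.2 ≠ a.1.2)
    (hcd : d.1.1 = c.1.2 ∧ d.1.2 ≠ c.1.1 ∧ d.1.2 ≠ c.1.2) :
    ∃ φ : G2p p ≃g G2p p, φ a = c ∧ φ b = d := by
  obtain ⟨h1, h2, h3⟩ := hab
  obtain ⟨g1, g2, g3⟩ := hcd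
  obtain ⟨e, he1, he2, he3⟩ := exists_perm3 a.2 (Ne.symm h2) (Ne.symm h3)
    c.2 (Ne.symm g2) (Ne.symm g3)
  refine ⟨permIso p e, ?_, ?_⟩
  · apply Subtype.ext
    rw [permIso_apply]
    exact Prod.ext he1 he2
  · apply Subtype.ext
    rw [permIso_apply]
    refine Prod.ext ?_ he3
    rw [h1, he2, g1]

lemma reorient (p : ℕ) {a b : G2pVert p}
    (h : b.1.1 ≠ a.1.1 ∧ b.1.1 ≠ a.1.2 ∧ b.1.2 = a.1.1) :
    a.1.1 = b.1.2 ∧ a.1.2 ≠ b.1.1 ∧ a.1.2 ≠ b.1.2 :=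
  ⟨h.2.2.symm, fun hh => h.2.1 hh.symm, fun hh => a.2 (hh.trans h.2.2).symm⟩

end Aux

/-- G_{2p} is vertex-transitive and edge-transitive. -/
theorem stmt15 (p : ℕ) (hp : 2 ≤ p) :
    (∀ u v : G2pVert p, ∃ φ : G2p p ≃g G2p p, φ u = v) ∧
    (∀ a b c d : G2pVert p, (G2p p).Adj a b → (G2p p).Adj c d →
      ∃ φ : G2p p ≃g G2p p, s(φ a, φ b) = s(c, d)) := by
  constructor
  · intro u v
    obtain ⟨e, he1, he2⟩ := exists_perm2 u.2 v.2
    exact ⟨permIso p e, Subtype.ext (Prod.ext he1 he2)⟩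
  · intro a b c d hab hcd
    rcases hab with hab | hab <;> rcases hcd with hcd | hcd
    · obtain ⟨φ, h1, h2⟩ := oriented_map p a b c d hab hcd
      exact ⟨φ, by rw [h1, h2]⟩
    · obtain ⟨φ, h1, h2⟩ := oriented_map p a b d c hab (reorient p hcd)
      exact ⟨φ, by rw [h1, h2, Sym2.eq_swap]⟩
    · obtain ⟨φ, h1, h2⟩ := oriented_map p b a c d (reorient p hab) hcd
      exact ⟨φ, by rw [h1, h2, Sym2.eq_swap]⟩
    · obtain ⟨φ, h1, h2⟩ := oriented_map p b a d c (reorient p hab) (reorient p hcd)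
      exact ⟨φ, by rw [h1, h2]⟩
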